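/- The reflexive digraph H_2, with vertices {x1,x2,x3,x4}, all loops, symmetric arcs between x1,x2 and between x2,x3 and between x2,x4, single arcs x1x3 and x4x1, and no other arcs (in particular no arcs between x3,x4 other than possibly loops, no arc x3x1, no arc x1x4), does not admit a Min-Max ordering. -/

import Mathlib

/-- `lt` is a Min-Max ordering of the digraph with arc relation `A`. -/
def IsMinMaxOrdering {V : Type*} (A : V → V → Prop) (lt : V → V → Prop) : Prop :=
  IsStrictTotalOrder V lt ∧
    ∀ i j s r : V, lt i j → lt s r → A i r → A j s → A i s ∧ A j r

/-- The digraph with arc relation `A` admits a Min-Max ordering. -/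
def HasMinMaxOrdering {V : Type*} (A : V → V → Prop) : Prop :=
  ∃ lt : V → V → Prop, IsMinMaxOrdering A lt

/-- The reflexive digraph $H_2$ on $x_1,x_2,x_3,x_4$ (identified with 0,1,2,3):
all loops, symmetric arcs $x_1x_2, x_2x_3, x_2x_4$, single arcs $x_1x_3$ and $x_4x_1$,
and no other arcs. -/
def H2 : Fin 4 → Fin 4 → Prop := fun a b =>
  a = b ∨ (a, b) ∈
    ({(0,1),(1,0),(1,2),(2,1),(1,3),(3,1),(0,2),(3,0)} : Set (Fin 4 × Fin 4))

def H2b : Fin 4 → Fin 4 → Bool := fun a b =>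
  a = b || (a, b) ∈ ([(0,1),(1,0),(1,2),(2,1),(1,3),(3,1),(0,2),(3,0)] : List (Fin 4 × Fin 4))

lemma H2_iff (a b : Fin 4) : H2 a b ↔ H2b a b = true := by
  simp [H2, H2b, Set.mem_insert_iff]

set_option maxRecDepth 100000 in
lemma key : ∀ σ : Fin 4 → Fin 4, Function.Injective σ → ∃ i j s r : Fin 4,
    σ i < σ j ∧ σ s < σ r ∧ H2b i r ∧ H2b j s ∧ ¬(H2b i s ∧ H2b j r) := by
  decide

theorem stmt7 : ¬ HasMinMaxOrdering H2 := by
  rintro ⟨lt, hsto, hmm⟩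
  letI := Classical.decRel lt
  have irr : ∀ a, ¬ lt a a := by haveI := hsto; exact fun a => irrefl_of lt a
  have tra : ∀ a b c, lt a b → lt b c → lt a c := hsto.toIsTrans.trans
  have tri : ∀ a b, lt a b ∨ a = b ∨ lt b a := by haveI := hsto; exact trichotomous_of lt
  let σ : Fin 4 → Fin 4 := fun a =>
    ⟨(Finset.univ.filter (fun b => lt b a)).card, by
      have hsub : (Finset.univ.filter (fun b => lt b a)) ⊆ Finset.univ.erase a := by
        intro b hb
        simp only [Finset.mem_filter, Finset.mem_univ, true_and] at hb
        simp only [Finset.mem_erase, Finset.mem_univ, and_true]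
        rintro rfl; exact irr b hb
      have := Finset.card_le_card hsub
      have h2 : (Finset.univ.erase a).card = 3 := by
        rw [Finset.card_erase_of_mem (Finset.mem_univ a)]; simp
      omega⟩
  have mono : ∀ a b, lt a b → σ a < σ b := by
    intro a b hab
    have hss : (Finset.univ.filter (fun c => lt c a)) ⊂ (Finset.univ.filter (fun c => lt c b)) := by
      constructor
      · intro c hc
        simp only [Finset.mem_filter, Finset.mem_univ, true_and] at hc ⊢
        exact tra c a b hc hab
      · intro hcon
        have : a ∈ Finset.univ.filter (fun c => lt c b) := by
          simp only [Finset.mem_filter, Finset.mem_univ, true_and]; exact hab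
        have := hcon this
        simp only [Finset.mem_filter, Finset.mem_univ, true_and] at this
        exact irr a this
    exact Finset.card_lt_card hss
  have lt_iff : ∀ a b, lt a b ↔ σ a < σ b := by
    intro a b
    refine ⟨mono a b, fun h => ?_⟩
    rcases tri a b with h' | rfl | h'
    · exact h'
    · exact absurd h (lt_irrefl _)
    · exact absurd (lt_trans h (mono b a h')) (lt_irrefl _)
  have inj : Function.Injective σ := by
    intro a b hab
    rcases tri a b with h' | rfl | h'
    · exact absurd (mono a b h') (by rw [hab]; exact lt_irrefl _)
    · rfl
    · exact absurd (mono b a h') (by rw [hab]; exact lt_irrefl _)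
  obtain ⟨i, j, s, r, hij, hsr, hir, hjs, hns⟩ := key σ inj
  obtain ⟨his, hjr⟩ := hmm i j s r ((lt_iff i j).mpr hij) ((lt_iff s r).mpr hsr)
    ((H2_iff i r).mpr hir) ((H2_iff j s).mpr hjs)
  exact hns ⟨(H2_iff i s).mp his, (H2_iff j r).mp hjr⟩
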